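/- Let γ be a (p,q)-clan containing two pairs of matching natural numbers at positions i < j and k < l with i < j < k < l (pattern 1122), and let γ' be obtained by re-pairing them so that positions i,k match and positions j,l match (pattern 1212). Then γ'(s;+) = γ(s;+) - 1 and γ'(s;-) = γ(s;-) - 1 for all s with j ≤ s < k; γ'(s;t) = γ(s;t) + 1 for i ≤ s < j ≤ t < k; γ'(s;t) = γ(s;t) + 1 for j ≤ s < k ≤ t < l; γ'(s;t) = γ(s;t) + 2 for j ≤ s < t < k; and all other rank numbers are unchanged. In particular γ < γ' in the combinatorial Bruhat order. -/
import Mathlib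


open Finset

/-- A `(p,q)`-clan on `n = p+q` positions.  Each position carries either a sign
(`Sum.inl true` = `+`, `Sum.inl false` = `-`) or is matched with another position
(`Sum.inr j` means position `i` is matched with position `j`).  Matching is
symmetric and irreflexive, and `#+ - #- = p - q`. -/
structure Clan (p q : ℕ) where
  c : Fin (p + q) → Bool ⊕ Fin (p + q)
  mate_ne : ∀ i j, c i = Sum.inr j → i ≠ j
  mate_mate : ∀ i j, c i = Sum.inr j → c j = Sum.inr i
  signs : (Finset.univ.filter fun i => c i = Sum.inl true).card + q
        = (Finset.univ.filter fun i => c i = Sum.inl false).card + p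

namespace Clan

variable {p q : ℕ}

/-- `γ(i;+)`: number of `+` signs plus complete pairs among the first `i` positions
(1-indexed; position `a : Fin (p+q)` is among the first `i` iff `a.val < i`). -/
def rankPlus (γ : Clan p q) (i : ℕ) : ℕ :=
  (Finset.univ.filter fun a : Fin (p + q) => a.val < i ∧ γ.c a = Sum.inl true).card
    + (Finset.univ.filter fun a : Fin (p + q) =>
        a.val < i ∧ ∃ b, γ.c a = Sum.inr b ∧ b < a).card

/-- `γ(i;-)`: number of `-` signs plus complete pairs among the first `i` positions. -/
def rankMinus (γ : Clan p q) (i : ℕ) : ℕ :=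
  (Finset.univ.filter fun a : Fin (p + q) => a.val < i ∧ γ.c a = Sum.inl false).card
    + (Finset.univ.filter fun a : Fin (p + q) =>
        a.val < i ∧ ∃ b, γ.c a = Sum.inr b ∧ b < a).card

/-- `γ(i;j)`: number of pairs `c_s = c_t` with `s ≤ i < j < t` (1-indexed). -/
def rankPair (γ : Clan p q) (i j : ℕ) : ℕ :=
  (Finset.univ.filter fun a : Fin (p + q) =>
    a.val < i ∧ ∃ b, γ.c a = Sum.inr b ∧ j ≤ b.val).card

/-- The combinatorial Bruhat order on `(p,q)`-clans. -/
def le (γ τ : Clan p q) : Prop :=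
  (∀ i, τ.rankPlus i ≤ γ.rankPlus i) ∧
  (∀ i, τ.rankMinus i ≤ γ.rankMinus i) ∧
  (∀ i j, i < j → γ.rankPair i j ≤ τ.rankPair i j)

/-- Strict combinatorial Bruhat order. -/
def lt (γ τ : Clan p q) : Prop := Clan.le γ τ ∧ ¬ Clan.le τ γ

end Clan

open Finset

section Aux
variable {n : ℕ}

lemma card_filter_split (P : Fin n → Prop) [DecidablePred P]
    (i j k l : Fin n) (hij : i ≠ j) (hik : i ≠ k) (hil : i ≠ l)
    (hjk : j ≠ k) (hjl : j ≠ l) (hkl : k ≠ l) :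
    (univ.filter P).card
      = (((univ : Finset (Fin n)) \ {i, j, k, l}).filter P).card
        + ((if P i then 1 else 0) + ((if P j then 1 else 0)
            + ((if P k then 1 else 0) + (if P l then 1 else 0)))) := by
  classical
  have hu : ((univ : Finset (Fin n)) \ {i, j, k, l}) ∪ {i, j, k, l} = univ :=
    Finset.sdiff_union_of_subset (Finset.subset_univ _)
  have hd : Disjoint ((((univ : Finset (Fin n)) \ {i, j, k, l})).filter P)
      (({i, j, k, l} : Finset (Fin n)).filter P) :=
    Finset.sdiff_disjoint.mono (Finset.filter_subset _ _) (Finset.filter_subset _ _)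
  have h1 : (univ.filter P).card
      = ((((univ : Finset (Fin n)) \ {i, j, k, l})).filter P).card
        + (({i, j, k, l} : Finset (Fin n)).filter P).card := by
    conv_lhs => rw [← hu]
    rw [Finset.filter_union, Finset.card_union_of_disjoint hd]
  rw [h1]
  congr 1
  rw [Finset.card_filter]
  rw [show ({i, j, k, l} : Finset (Fin n)) = insert i (insert j (insert k {l})) from rfl]
  rw [Finset.sum_insert (by simp [hij, hik, hil]),
      Finset.sum_insert (by simp [hjk, hjl]),
      Finset.sum_insert (by simp [hkl]), Finset.sum_singleton]

lemma card_filter_compl_congr (P Q : Fin n → Prop) [DecidablePred P] [DecidablePred Q]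
    (i j k l : Fin n)
    (h : ∀ a, a ≠ i → a ≠ j → a ≠ k → a ≠ l → (P a ↔ Q a)) :
    ((((univ : Finset (Fin n)) \ {i, j, k, l})).filter P).card
      = ((((univ : Finset (Fin n)) \ {i, j, k, l})).filter Q).card := by
  congr 1
  apply Finset.filter_congr
  intro a ha
  simp only [Finset.mem_sdiff, Finset.mem_univ, true_and, Finset.mem_insert,
    Finset.mem_singleton, not_or] at ha
  exact h a ha.1 ha.2.1 ha.2.2.1 ha.2.2.2

end Aux

/-- the move `1122 → 1212` (nested pairs `(i,j)`, `(k,l)` with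
`i < j < k < l` re-paired as `(i,k)`, `(j,l)`) changes rank numbers exactly as
stated, and yields `γ < γ'` in the combinatorial Bruhat order. -/
theorem clan_move_1122_1212 {p q : ℕ} (γ γ' : Clan p q) (i j k l : Fin (p + q))
    (hij : i < j) (hjk : j < k) (hkl : k < l)
    (hi : γ.c i = Sum.inr j) (hj : γ.c j = Sum.inr i)
    (hk : γ.c k = Sum.inr l) (hl : γ.c l = Sum.inr k)
    (hi' : γ'.c i = Sum.inr k) (hk' : γ'.c k = Sum.inr i)
    (hj' : γ'.c j = Sum.inr l) (hl' : γ'.c l = Sum.inr j)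
    (hother : ∀ a, a ≠ i → a ≠ j → a ≠ k → a ≠ l → γ'.c a = γ.c a) :
    (∀ s, j.val < s → s ≤ k.val →
      γ'.rankPlus s + 1 = γ.rankPlus s ∧ γ'.rankMinus s + 1 = γ.rankMinus s) ∧
    (∀ s, ¬(j.val < s ∧ s ≤ k.val) →
      γ'.rankPlus s = γ.rankPlus s ∧ γ'.rankMinus s = γ.rankMinus s) ∧
    (∀ s t, i.val < s → s ≤ j.val → j.val < t → t ≤ k.val →
      γ'.rankPair s t = γ.rankPair s t + 1) ∧
    (∀ s t, j.val < s → s ≤ k.val → k.val < t → t ≤ l.val →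
      γ'.rankPair s t = γ.rankPair s t + 1) ∧
    (∀ s t, j.val < s → s < t → t ≤ k.val →
      γ'.rankPair s t = γ.rankPair s t + 2) ∧
    (∀ s t, s < t →
      ¬(i.val < s ∧ s ≤ j.val ∧ j.val < t ∧ t ≤ k.val) →
      ¬(j.val < s ∧ s ≤ k.val ∧ k.val < t ∧ t ≤ l.val) →
      ¬(j.val < s ∧ t ≤ k.val) →
      γ'.rankPair s t = γ.rankPair s t) ∧
    Clan.lt γ γ' := by
  classical
  have hik : i < k := hij.trans hjk
  have hjl : j < l := hjk.trans hkl
  have hil : i < l := hij.trans hjl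
  have dij : i ≠ j := hij.ne
  have dik : i ≠ k := hik.ne
  have dil : i ≠ l := hil.ne
  have djk : j ≠ k := hjk.ne
  have djl : j ≠ l := hjl.ne
  have dkl : k ≠ l := hkl.ne
  have nji : ¬ j < i := lt_asymm hij
  have nki : ¬ k < i := lt_asymm hik
  have nlk : ¬ l < k := lt_asymm hkl
  have nlj : ¬ l < j := lt_asymm hjl
  have vij : i.val < j.val := hij
  have vjk : j.val < k.val := hjk
  have vkl : k.val < l.val := hkl
  -- key identity for the "pairs" part shared by rankPlus and rankMinus
  have keyB : ∀ s : ℕ,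
      (Finset.univ.filter fun a : Fin (p + q) =>
        a.val < s ∧ ∃ b, γ'.c a = Sum.inr b ∧ b < a).card
        + (if j.val < s then 1 else 0)
      = (Finset.univ.filter fun a : Fin (p + q) =>
        a.val < s ∧ ∃ b, γ.c a = Sum.inr b ∧ b < a).card
        + (if k.val < s then 1 else 0) := by
    intro s
    rw [card_filter_split (fun a : Fin (p + q) =>
          a.val < s ∧ ∃ b, γ'.c a = Sum.inr b ∧ b < a) i j k l dij dik dil djk djl dkl,
        card_filter_split (fun a : Fin (p + q) =>
          a.val < s ∧ ∃ b, γ.c a = Sum.inr b ∧ b < a) i j k l dij dik dil djk djl dkl,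
        card_filter_compl_congr (fun a : Fin (p + q) =>
          a.val < s ∧ ∃ b, γ'.c a = Sum.inr b ∧ b < a)
          (fun a : Fin (p + q) => a.val < s ∧ ∃ b, γ.c a = Sum.inr b ∧ b < a) i j k l
          (fun a h1 h2 h3 h4 => by simp only [hother a h1 h2 h3 h4])]
    simp only [hi, hj, hk, hl, hi', hj', hk', hl', Sum.inr.injEq, exists_eq_left',
      eq_comm, nji, nki, nlk, nlj, hij, hjk, hkl, hik, hjl, hil, and_false, and_true,
      if_false, if_true, ite_false, ite_true]
    ring
  have keyP : ∀ s : ℕ, γ'.rankPlus s + (if j.val < s then 1 else 0)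
      = γ.rankPlus s + (if k.val < s then 1 else 0) := by
    intro s
    unfold Clan.rankPlus
    have hA : (Finset.univ.filter fun a : Fin (p + q) =>
          a.val < s ∧ γ'.c a = Sum.inl true).card
        = (Finset.univ.filter fun a : Fin (p + q) =>
          a.val < s ∧ γ.c a = Sum.inl true).card := by
      rw [card_filter_split (fun a : Fin (p + q) =>
            a.val < s ∧ γ'.c a = Sum.inl true) i j k l dij dik dil djk djl dkl,
          card_filter_split (fun a : Fin (p + q) =>
            a.val < s ∧ γ.c a = Sum.inl true) i j k l dij dik dil djk djl dkl,
          card_filter_compl_congr (fun a : Fin (p + q) => a.val < s ∧ γ'.c a = Sum.inl true)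
            (fun a : Fin (p + q) => a.val < s ∧ γ.c a = Sum.inl true) i j k l
            (fun a h1 h2 h3 h4 => by simp only [hother a h1 h2 h3 h4])]
      simp [hi, hj, hk, hl, hi', hj', hk', hl']
    have hB := keyB s
    omega
  have keyM : ∀ s : ℕ, γ'.rankMinus s + (if j.val < s then 1 else 0)
      = γ.rankMinus s + (if k.val < s then 1 else 0) := by
    intro s
    unfold Clan.rankMinus
    have hA : (Finset.univ.filter fun a : Fin (p + q) =>
          a.val < s ∧ γ'.c a = Sum.inl false).card
        = (Finset.univ.filter fun a : Fin (p + q) =>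
          a.val < s ∧ γ.c a = Sum.inl false).card := by
      rw [card_filter_split (fun a : Fin (p + q) =>
            a.val < s ∧ γ'.c a = Sum.inl false) i j k l dij dik dil djk djl dkl,
          card_filter_split (fun a : Fin (p + q) =>
            a.val < s ∧ γ.c a = Sum.inl false) i j k l dij dik dil djk djl dkl,
          card_filter_compl_congr (fun a : Fin (p + q) => a.val < s ∧ γ'.c a = Sum.inl false)
            (fun a : Fin (p + q) => a.val < s ∧ γ.c a = Sum.inl false) i j k l
            (fun a h1 h2 h3 h4 => by simp only [hother a h1 h2 h3 h4])]
      simp [hi, hj, hk, hl, hi', hj', hk', hl']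
    have hB := keyB s
    omega
  have key2 : ∀ s t : ℕ, γ'.rankPair s t
      + ((if i.val < s ∧ t ≤ j.val then 1 else 0) + (if j.val < s ∧ t ≤ i.val then 1 else 0)
        + (if k.val < s ∧ t ≤ l.val then 1 else 0) + (if l.val < s ∧ t ≤ k.val then 1 else 0))
      = γ.rankPair s t
      + ((if i.val < s ∧ t ≤ k.val then 1 else 0) + (if j.val < s ∧ t ≤ l.val then 1 else 0)
        + (if k.val < s ∧ t ≤ i.val then 1 else 0) + (if l.val < s ∧ t ≤ j.val then 1 else 0)) := by
    intro s t
    unfold Clan.rankPair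
    rw [card_filter_split (fun a : Fin (p + q) =>
          a.val < s ∧ ∃ b, γ'.c a = Sum.inr b ∧ t ≤ b.val) i j k l dij dik dil djk djl dkl,
        card_filter_split (fun a : Fin (p + q) =>
          a.val < s ∧ ∃ b, γ.c a = Sum.inr b ∧ t ≤ b.val) i j k l dij dik dil djk djl dkl,
        card_filter_compl_congr (fun a : Fin (p + q) =>
          a.val < s ∧ ∃ b, γ'.c a = Sum.inr b ∧ t ≤ b.val)
          (fun a : Fin (p + q) => a.val < s ∧ ∃ b, γ.c a = Sum.inr b ∧ t ≤ b.val) i j k l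
          (fun a h1 h2 h3 h4 => by simp only [hother a h1 h2 h3 h4])]
    simp only [hi, hj, hk, hl, hi', hj', hk', hl', Sum.inr.injEq, exists_eq_left', eq_comm]
    ring
  have key2' : ∀ s t : ℕ, s < t → γ'.rankPair s t
      + ((if i.val < s ∧ t ≤ j.val then 1 else 0) + (if k.val < s ∧ t ≤ l.val then 1 else 0))
      = γ.rankPair s t
      + ((if i.val < s ∧ t ≤ k.val then 1 else 0) + (if j.val < s ∧ t ≤ l.val then 1 else 0)) := by
    intro s t hst
    have h := key2 s t
    rw [if_neg (show ¬(j.val < s ∧ t ≤ i.val) by omega),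
        if_neg (show ¬(l.val < s ∧ t ≤ k.val) by omega),
        if_neg (show ¬(k.val < s ∧ t ≤ i.val) by omega),
        if_neg (show ¬(l.val < s ∧ t ≤ j.val) by omega)] at h
    omega
  refine ⟨?_, ?_, ?_, ?_, ?_, ?_, ?_, ?_⟩
  · intro s hs1 hs2
    have hP := keyP s
    have hM := keyM s
    split_ifs at hP hM <;> constructor <;> omega
  · intro s hs
    have hP := keyP s
    have hM := keyM s
    split_ifs at hP hM <;> constructor <;> omega
  · intro s t h1 h2 h3 h4
    have h := key2' s t (by omega)
    split_ifs at h <;> omega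
  · intro s t h1 h2 h3 h4
    have h := key2' s t (by omega)
    split_ifs at h <;> omega
  · intro s t h1 h2 h3
    have h := key2' s t (by omega)
    split_ifs at h <;> omega
  · intro s t h1 h2 h3 h4
    have h := key2' s t h1
    split_ifs at h <;> omega
  · refine ⟨?_, ?_, ?_⟩
    · intro s
      have h := keyP s
      split_ifs at h <;> omega
    · intro s
      have h := keyM s
      split_ifs at h <;> omega
    · intro s t hst
      have h := key2' s t hst
      split_ifs at h <;> omega
  · intro hle
    have h3 := hle.2.2 j.val k.val vjk
    have h := key2' j.val k.val vjk
    split_ifs at h <;> omega
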